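/- Fix s > 0 and an integer k ≥ 1. Let r_i, r_j ≥ 1 and α_i, α_j > 0 be reals with r_i·α_i > 1 and r_j·α_j > 1. Define f(r, α) = s·k!·Γ(1 − 1/(rα)) / Γ(k + 1 − 1/(rα)), the expected job latency when each of k tasks runs as r-fold replicas whose per-copy Pareto tail index is α (so that each task's completion time is Pareto(s, rα) and the latency is the expected maximum of k i.i.d. Pareto(s, rα) variables). Then f(r_j, α_j) < f(r_i, α_i) if and only if α_i/α_j < r_j/r_i. -/
import Mathlib


open Real

private lemma gamma_add_nat (u : ℝ) (hu : 0 < u) (k : ℕ) :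
    Gamma (u + k) = Gamma u * ∏ m ∈ Finset.range k, (u + m) := by
  induction k with
  | zero => simp
  | succ n ih =>
    have h1 : u + (n + 1 : ℕ) = (u + n) + 1 := by push_cast; ring
    rw [h1, Real.Gamma_add_one (by positivity), ih, Finset.prod_range_succ]
    ring

private lemma prod_mono (k : ℕ) (hk : 1 ≤ k) (u v : ℝ) (hu : 0 < u) (huv : u < v) :
    (∏ m ∈ Finset.range k, (u + m)) < ∏ m ∈ Finset.range k, (v + m) := by
  apply Finset.prod_lt_prod_of_nonempty
  · intro i _; positivity
  · intro i _; linarith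
  · exact Finset.nonempty_range_iff.mpr (by omega)

/-- With load-dependent tail index, increasing the replication rate from `r_i` to `r_j`
(changing the tail index from `α_i` to `α_j`) reduces the expected latency
`f(r, α) = s·k!·Γ(1 − 1/(rα))/Γ(k + 1 − 1/(rα))` if and only if `α_i/α_j < r_j/r_i`. -/
theorem stmt14 (s : ℝ) (hs : 0 < s) (k : ℕ) (hk : 1 ≤ k)
    (ri rj αi αj : ℝ) (hri : 1 ≤ ri) (hrj : 1 ≤ rj) (hαi : 0 < αi) (hαj : 0 < αj)
    (hi : 1 < ri * αi) (hj : 1 < rj * αj)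
    (f : ℝ → ℝ → ℝ)
    (hf : ∀ r α : ℝ, f r α =
      s * (k.factorial : ℝ) * Gamma (1 - 1 / (r * α)) / Gamma ((k : ℝ) + 1 - 1 / (r * α))) :
    f rj αj < f ri αi ↔ αi / αj < rj / ri := by
  set A := ri * αi with hA
  set B := rj * αj with hB
  have hA1 : (1:ℝ) < A := hi
  have hB1 : (1:ℝ) < B := hj
  have hA0 : (0:ℝ) < A := by linarith
  have hB0 : (0:ℝ) < B := by linarith
  set uA : ℝ := 1 - 1 / A with huA
  set uB : ℝ := 1 - 1 / B with huB
  have huA0 : 0 < uA := by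
    have : 1 / A < 1 := by rw [div_lt_one hA0]; exact hA1
    simp only [huA]; linarith
  have huB0 : 0 < uB := by
    have : 1 / B < 1 := by rw [div_lt_one hB0]; exact hB1
    simp only [huB]; linarith
  set P : ℝ → ℝ := fun u => ∏ m ∈ Finset.range k, (u + m) with hP
  have hPA0 : 0 < P uA := Finset.prod_pos (fun i _ => by positivity)
  have hPB0 : 0 < P uB := Finset.prod_pos (fun i _ => by positivity)
  have hGA : Gamma uA ≠ 0 := ne_of_gt (Real.Gamma_pos_of_pos huA0)
  have hGB : Gamma uB ≠ 0 := ne_of_gt (Real.Gamma_pos_of_pos huB0)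
  have hfi : f ri αi = s * (k.factorial : ℝ) / P uA := by
    rw [hf]
    have h1 : (k : ℝ) + 1 - 1 / (ri * αi) = uA + k := by rw [huA, ← hA]; ring
    rw [h1, gamma_add_nat uA huA0, ← hA, ← huA]
    field_simp
    ring
  have hfj : f rj αj = s * (k.factorial : ℝ) / P uB := by
    rw [hf]
    have h1 : (k : ℝ) + 1 - 1 / (rj * αj) = uB + k := by rw [huB, ← hB]; ring
    rw [h1, gamma_add_nat uB huB0, ← hB, ← huB]
    field_simp
    ring
  have hsk : 0 < s * (k.factorial : ℝ) := by positivity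
  rw [hfi, hfj, div_lt_div_iff₀ hPB0 hPA0]
  have step1 : s * ↑k.factorial * P uA < s * ↑k.factorial * P uB ↔ P uA < P uB :=
    mul_lt_mul_iff_right₀ hsk
  rw [step1]
  have step2 : P uA < P uB ↔ uA < uB := by
    constructor
    · intro h
      by_contra h'
      push_neg at h'
      rcases eq_or_lt_of_le h' with he | hlt
      · rw [he] at h; exact lt_irrefl _ h
      · exact absurd h (not_lt.mpr (le_of_lt (prod_mono k hk uB uA huB0 hlt)))
    · exact prod_mono k hk uA uB huA0
  rw [step2]
  have step3 : uA < uB ↔ A < B := by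
    rw [huA, huB, sub_lt_sub_iff_left]
    rw [div_lt_div_iff₀ hB0 hA0]; constructor <;> intro h <;> nlinarith
  rw [step3, hA, hB, div_lt_div_iff₀ hαj (by linarith : (0:ℝ) < ri)]
  constructor <;> intro h <;> nlinarith
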